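/- Let λ ∈ Λ₊ with Im λ ≥ 0, let N = Re λ + 1 and m = Im λ, and let α₋ = (1−i)/2. Let a₀, …, a_M ∈ ℂ and let p(z) = Σ_{n=0}^M a_n z^{(n)}(z) be the corresponding discrete analytic polynomial. Then p(w) = 0 for every w ∈ R_λ if and only if the polynomial Σ_{n=0}^M a_n Xⁿ ∈ ℂ[X] is divisible by X^N (X + α₋)^m. In particular, every nonzero discrete analytic polynomial vanishing on R_λ has degree at least Re λ + Im λ + 1. -/

import Mathlib

open Complex Finset GaussianInt

noncomputable section

/-- The lattice point `i` in the Gaussian integers. -/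
def ii : GaussianInt := ⟨0, 1⟩

/-- `f` is discrete analytic on the whole lattice `Λ = ℤ + iℤ`. -/
def DAnalytic (f : GaussianInt → ℂ) : Prop :=
  ∀ z : GaussianInt,
    (f (z + 1 + ii) - f z) / (1 + Complex.I) = (f (z + 1) - f (z + ii)) / (1 - Complex.I)

/-- `f` is discrete analytic on the right half lattice `Λ₊ = {z : Re z ≥ 0}`. -/
def DAnalyticOn (f : GaussianInt → ℂ) : Prop :=
  ∀ z : GaussianInt, 0 ≤ z.re →
    (f (z + 1 + ii) - f z) / (1 + Complex.I) = (f (z + 1) - f (z + ii)) / (1 - Complex.I)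

/-- `γ 0, γ 1, …, γ n` is a path in the lattice from `a` to `b`:
consecutive points are at distance `1`. -/
def IsPath (γ : ℕ → GaussianInt) (n : ℕ) (a b : GaussianInt) : Prop :=
  γ 0 = a ∧ γ n = b ∧ ∀ k < n, ‖(γ (k + 1) : ℂ) - (γ k : ℂ)‖ = 1

/-- The discrete integral `∫_γ f δz` along the path `γ 0, …, γ n`. -/
def discInt (f : GaussianInt → ℂ) (γ : ℕ → GaussianInt) (n : ℕ) : ℂ :=
  ∑ k ∈ Finset.range n, ((f (γ k) + f (γ (k + 1))) / 2) * ((γ (k + 1) : ℂ) - (γ k : ℂ))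

/-- The canonical lattice path from `0` to `z`: first along the real axis, then vertically. -/
def cpath (z : GaussianInt) (k : ℕ) : GaussianInt :=
  ⟨z.re.sign * ((min k z.re.natAbs : ℕ) : ℤ),
   z.im.sign * ((min k (z.re.natAbs + z.im.natAbs) - z.re.natAbs : ℕ) : ℤ)⟩

/-- The length of the canonical path from `0` to `z`. -/
def cpathLen (z : GaussianInt) : ℕ := z.re.natAbs + z.im.natAbs

/-- The operator `Z`: `Zf(z) = (f(0) - f(z))/2 + ∫_0^z f δz`, the integral being taken
along the canonical path (for discrete analytic `f` the integral is path-independent). -/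
def Zop (f : GaussianInt → ℂ) : GaussianInt → ℂ := fun z =>
  (f 0 - f z) / 2 + discInt f (cpath z) (cpathLen z)

/-- The basic discrete analytic polynomials `z⁽ⁿ⁾ = Zⁿ1`. -/
def zpoly (n : ℕ) : GaussianInt → ℂ := Zop^[n] (fun _ => 1)

/-- `α₊ = (1+i)/2`. -/
def aPlus : ℂ := (1 + Complex.I) / 2
/-- `α₋ = (1-i)/2`. -/
def aMinus : ℂ := (1 - Complex.I) / 2

/-- The difference operator `δx`. -/
def dxOp (f : GaussianInt → ℂ) : GaussianInt → ℂ := fun z => f (z + 1) - f z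
/-- The difference operator `δy`. -/
def dyOp (f : GaussianInt → ℂ) : GaussianInt → ℂ := fun z => f (z + ii) - f z

/-- `f` belongs to the Hardy space `H₂(Λ₊)` with coefficient sequence `c`:
`f(z) = Σ c(n) z⁽ⁿ⁾(z)` on `Λ₊` and `Σ |c(n)|² < ∞`. -/
def MemH2 (f : GaussianInt → ℂ) (c : ℕ → ℂ) : Prop :=
  Summable (fun n => ‖c n‖ ^ 2) ∧
  ∀ z : GaussianInt, 0 ≤ z.re → HasSum (fun n => c n * zpoly n z) (f z)


/-- The rectangle `R_λ = {z ∈ Λ₊ : Re z ≤ Re λ, |Im z| ≤ |Im λ|, Im z · Im λ ≥ 0}`. -/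
def RRect (l : GaussianInt) : Set GaussianInt :=
  {z | 0 ≤ z.re ∧ z.re ≤ l.re ∧ |z.im| ≤ |l.im| ∧ 0 ≤ z.im * l.im}
def Apoly : Polynomial ℂ := 1 + Polynomial.C aPlus * Polynomial.X
def Dpoly : Polynomial ℂ := 1 + Polynomial.C aMinus * Polynomial.X
def Dinv : PowerSeries ℂ := PowerSeries.mk fun n => (-aMinus) ^ n
def G (x y : ℕ) : PowerSeries ℂ :=
  (((1 + Polynomial.X) ^ x * Apoly ^ y : Polynomial ℂ) : PowerSeries ℂ) * Dinv ^ y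
lemma aMinus_ne : aMinus ≠ 0 := by
  simp only [aMinus, div_ne_zero_iff, ne_eq, OfNat.ofNat_ne_zero, not_false_iff, and_true]
  intro h
  have := congrArg Complex.im h
  simp at this

lemma neg_aMinus_ne : -aMinus ≠ 0 := neg_ne_zero.mpr aMinus_ne

lemma aPlus_sub_aMinus : aPlus - aMinus = Complex.I := by
  simp [aPlus, aMinus]; ring

lemma Dpoly_mul_Dinv : (Dpoly : PowerSeries ℂ) * Dinv = 1 := by
  ext n
  have : (Dpoly : PowerSeries ℂ) = 1 + PowerSeries.C aMinus * PowerSeries.X := by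
    simp [Dpoly]
  rw [this, add_mul, one_mul, mul_assoc]
  cases n with
  | zero => simp [Dinv]
  | succ n =>
      simp only [map_add, PowerSeries.coeff_C_mul, PowerSeries.coeff_succ_X_mul,
        PowerSeries.coeff_one, Dinv, PowerSeries.coeff_mk]
      have : (-aMinus) ^ (n + 1) + aMinus * (-aMinus) ^ n = 0 := by ring
      simpa using this

lemma G_zero_zero : G 0 0 = 1 := by simp [G]

lemma G_succ_x (x y : ℕ) : G (x+1) y = (1 + PowerSeries.X) * G x y := by
  simp only [G, pow_succ]
  push_cast
  ring

lemma G_succ_y (x y : ℕ) :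
    (1 + PowerSeries.C aMinus * PowerSeries.X) * G x (y+1)
      = (1 + PowerSeries.C aPlus * PowerSeries.X) * G x y := by
  have hD : ((Dpoly : Polynomial ℂ) : PowerSeries ℂ)
      = 1 + PowerSeries.C aMinus * PowerSeries.X := by simp [Dpoly]
  have hA : ((Apoly : Polynomial ℂ) : PowerSeries ℂ)
      = 1 + PowerSeries.C aPlus * PowerSeries.X := by simp [Apoly]
  rw [← hD, ← hA]
  simp only [G, pow_succ]
  push_cast
  linear_combination ((1 + PowerSeries.X) ^ x * ((Apoly : Polynomial ℂ) : PowerSeries ℂ) ^ y *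
    ((Apoly : Polynomial ℂ) : PowerSeries ℂ) * Dinv ^ y) * Dpoly_mul_Dinv

lemma Dpow_mul_G (x y m : ℕ) (h : y ≤ m) :
    (Dpoly : PowerSeries ℂ) ^ m * G x y
      = (((1 + Polynomial.X) ^ x * Apoly ^ y * Dpoly ^ (m - y) : Polynomial ℂ) :
          PowerSeries ℂ) := by
  obtain ⟨k, rfl⟩ : ∃ k, m = k + y := ⟨m - y, by omega⟩
  simp only [G, Nat.add_sub_cancel]
  push_cast
  rw [pow_add]
  have hcan : ((Dpoly : PowerSeries ℂ) ^ y) * Dinv ^ y = 1 := by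
    rw [← mul_pow, Dpoly_mul_Dinv, one_pow]
  linear_combination ((1 + PowerSeries.X) ^ x * ((Apoly : Polynomial ℂ) : PowerSeries ℂ) ^ y *
    (Dpoly : PowerSeries ℂ) ^ k) * hcan

lemma star2 (x y : ℕ) :
    (PowerSeries.X : PowerSeries ℂ) *
      ((1 - G x y) + (∑ j ∈ Finset.range x, (G j 0 + G (j+1) 0))
        + PowerSeries.C Complex.I * ∑ j ∈ Finset.range y, (G x j + G x (j+1)))
      = 2 * (G x y - 1) := by
  induction y with
  | zero =>
      induction x with
      | zero => simp [G_zero_zero]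
      | succ x ihx =>
          rw [Finset.sum_range_succ]
          have h := G_succ_x x 0
          simp only [Finset.range_zero, Finset.sum_empty, mul_zero, add_zero] at ihx ⊢
          rw [h]
          linear_combination ihx
  | succ y ihy =>
      rw [Finset.sum_range_succ]
      have h := G_succ_y x y
      have hI : PowerSeries.C Complex.I
          = 2 * PowerSeries.C aPlus - 1 := by
        have : Complex.I = 2 * aPlus - 1 := by simp [aPlus]; ring
        rw [this]; push_cast [map_sub, map_mul, map_ofNat, map_one]; ring
      have hM : PowerSeries.C aMinus = 1 - PowerSeries.C aPlus := by
        have : aMinus = 1 - aPlus := by simp [aPlus, aMinus]; ring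
        rw [this, map_sub, map_one]
      rw [hM] at h
      rw [hI] at ihy ⊢
      linear_combination ihy - 2 * h

def pt (x y : ℕ) : GaussianInt := ⟨(x : ℤ), (y : ℤ)⟩

lemma cpath_pt (x y k : ℕ) : cpath (pt x y) k = pt (min k x) (min k (x+y) - x) := by
  have hre : ((x : ℤ)).natAbs = x := Int.natAbs_natCast x
  have him : ((y : ℤ)).natAbs = y := Int.natAbs_natCast y
  unfold cpath pt
  simp only [hre, him]
  have h1 : (x : ℤ).sign * ((min k x : ℕ) : ℤ) = ((min k x : ℕ) : ℤ) := by
    cases x with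
    | zero => simp
    | succ n => simp [Int.sign_natCast_of_ne_zero]
  have h2 : (y : ℤ).sign * ((min k (x + y) - x : ℕ) : ℤ) = ((min k (x+y) - x : ℕ) : ℤ) := by
    cases y with
    | zero =>
        have : min k (x + 0) - x = 0 := by omega
        simp [this]
    | succ n => simp [Int.sign_natCast_of_ne_zero]
  rw [h1, h2]

lemma pt_toComplex (x y : ℕ) : ((pt x y : GaussianInt) : ℂ) = (x : ℂ) + (y : ℂ) * Complex.I := by
  simp [pt, toComplex_def']

lemma discInt_pt (f : GaussianInt → ℂ) (x y : ℕ) :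
    discInt f (cpath (pt x y)) (x + y)
      = (∑ j ∈ Finset.range x, (f (pt j 0) + f (pt (j+1) 0)) / 2)
        + (∑ j ∈ Finset.range y, (f (pt x j) + f (pt x (j+1))) / 2) * Complex.I := by
  unfold discInt
  rw [Finset.sum_range_add]
  congr 1
  · apply Finset.sum_congr rfl
    intro k hk
    rw [Finset.mem_range] at hk
    have e1 : cpath (pt x y) k = pt k 0 := by
      rw [cpath_pt]; congr 1 <;> omega
    have e2 : cpath (pt x y) (k+1) = pt (k+1) 0 := by
      rw [cpath_pt]; congr 1 <;> omega
    rw [e1, e2, pt_toComplex, pt_toComplex]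
    push_cast
    ring
  · rw [Finset.sum_mul]
    apply Finset.sum_congr rfl
    intro j hj
    rw [Finset.mem_range] at hj
    have e1 : cpath (pt x y) (x + j) = pt x j := by
      rw [cpath_pt]; congr 1 <;> omega
    have e2 : cpath (pt x y) (x + j + 1) = pt x (j+1) := by
      rw [cpath_pt]; congr 1 <;> omega
    rw [e1, e2, pt_toComplex, pt_toComplex]
    push_cast
    ring

lemma Zop_pt (f : GaussianInt → ℂ) (x y : ℕ) :
    Zop f (pt x y) = (f (pt 0 0) - f (pt x y)) / 2
      + ((∑ j ∈ Finset.range x, (f (pt j 0) + f (pt (j+1) 0)) / 2)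
        + (∑ j ∈ Finset.range y, (f (pt x j) + f (pt x (j+1))) / 2) * Complex.I) := by
  have h0 : (0 : GaussianInt) = pt 0 0 := by
    unfold pt; rfl
  have hlen : cpathLen (pt x y) = x + y := by
    unfold cpathLen pt; simp
  unfold Zop
  rw [hlen, discInt_pt, ← h0]

lemma coeff_G_zero (x y : ℕ) : PowerSeries.coeff 0 (G x y) = 1 := by
  have h1 : (((1 + Polynomial.X) ^ x * Apoly ^ y : Polynomial ℂ)).coeff 0 = 1 := by
    rw [Polynomial.coeff_zero_eq_eval_zero]; simp [Apoly]
  have h2 : PowerSeries.constantCoeff (Dinv ^ y) = 1 := by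
    rw [map_pow]
    have h3 : PowerSeries.constantCoeff Dinv = 1 := by
      rw [← PowerSeries.coeff_zero_eq_constantCoeff]; simp [Dinv]
    rw [h3, one_pow]
  rw [PowerSeries.coeff_zero_eq_constantCoeff, G, map_mul, h2, mul_one,
    ← PowerSeries.coeff_zero_eq_constantCoeff, Polynomial.coeff_coe, h1]

lemma zpoly_eq (n x y : ℕ) : zpoly n (pt x y) = PowerSeries.coeff n (G x y) := by
  induction n generalizing x y with
  | zero =>
      simp only [zpoly, Function.iterate_zero, id]
      rw [coeff_G_zero]
  | succ n ih =>
      have hz : zpoly (n+1) = Zop (zpoly n) := by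
        unfold zpoly
        rw [Function.iterate_succ_apply']
      rw [hz, Zop_pt]
      have hsums1 : ∀ j : ℕ, zpoly n (pt j 0) = PowerSeries.coeff n (G j 0) := fun j => ih j 0
      have hT := congrArg (PowerSeries.coeff (n+1)) (star2 x y)
      rw [PowerSeries.coeff_succ_X_mul] at hT
      simp only [map_add, map_sub, map_sum, PowerSeries.coeff_C_mul, map_mul,
        PowerSeries.coeff_one] at hT
      -- hT : (coeff n 1 - coeff n (G x y)) + Σ + I * Σ = coeff (n+1) (2*(G x y - 1))
      have h2 : PowerSeries.coeff (n+1) (2 * (G x y - 1)) =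
          2 * PowerSeries.coeff (n+1) (G x y) := by
        have : (2 : PowerSeries ℂ) * (G x y - 1) = PowerSeries.C 2 * (G x y - 1) := by
          rw [show (2 : PowerSeries ℂ) = PowerSeries.C 2 from (map_ofNat _ 2).symm]
        rw [this, PowerSeries.coeff_C_mul, map_sub]
        simp
      rw [h2] at hT
      have hcn1 : (if n = 0 then (1:ℂ) else 0) = PowerSeries.coeff n (G 0 0) := by
        rw [G_zero_zero, PowerSeries.coeff_one]
      rw [ih x y, ih 0 0]
      have e1 : ∑ j ∈ Finset.range x, (zpoly n (pt j 0) + zpoly n (pt (j+1) 0)) / 2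
          = (∑ j ∈ Finset.range x,
              (PowerSeries.coeff n (G j 0) + PowerSeries.coeff n (G (j+1) 0))) / 2 := by
        rw [← Finset.sum_div]
        congr 1
        exact Finset.sum_congr rfl fun j _ => by rw [ih, ih]
      have e2 : ∑ j ∈ Finset.range y, (zpoly n (pt x j) + zpoly n (pt x (j+1))) / 2
          = (∑ j ∈ Finset.range y,
              (PowerSeries.coeff n (G x j) + PowerSeries.coeff n (G x (j+1)))) / 2 := by
        rw [← Finset.sum_div]
        congr 1
        exact Finset.sum_congr rfl fun j _ => by rw [ih, ih]
      rw [e1, e2]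
      rw [hcn1] at hT
      linear_combination hT / 2

def Lsum (B : ℕ) (P : Polynomial ℂ) (H : PowerSeries ℂ) : ℂ :=
  ∑ n ∈ Finset.range B, P.coeff n * PowerSeries.coeff n H

lemma Lsum_eq_of (P : Polynomial ℂ) (H : PowerSeries ℂ) {B B' : ℕ}
    (h1 : P.natDegree < B) (hBB : B ≤ B') : Lsum B' P H = Lsum B P H := by
  unfold Lsum
  refine (Finset.sum_subset (Finset.range_subset_range.2 hBB) fun n _ hn => ?_).symm
  rw [Finset.mem_range, not_lt] at hn
  rw [Polynomial.coeff_eq_zero_of_natDegree_lt (lt_of_lt_of_le h1 hn), zero_mul]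

lemma Lsum_congr_bound (P : Polynomial ℂ) (H : PowerSeries ℂ) {B B' : ℕ}
    (h1 : P.natDegree < B) (h2 : P.natDegree < B') : Lsum B P H = Lsum B' P H := by
  rw [Lsum_eq_of P H (Nat.lt_succ_self _) h1, Lsum_eq_of P H (Nat.lt_succ_self _) h2]

lemma Lsum_add (B : ℕ) (P Q : Polynomial ℂ) (H : PowerSeries ℂ) :
    Lsum B (P + Q) H = Lsum B P H + Lsum B Q H := by
  unfold Lsum
  rw [← Finset.sum_add_distrib]
  exact Finset.sum_congr rfl fun n _ => by rw [Polynomial.coeff_add, add_mul]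

lemma Lsum_C_mul (B : ℕ) (c : ℂ) (P : Polynomial ℂ) (H : PowerSeries ℂ) :
    Lsum B (Polynomial.C c * P) H = c * Lsum B P H := by
  unfold Lsum
  rw [Finset.mul_sum]
  exact Finset.sum_congr rfl fun n _ => by rw [Polynomial.coeff_C_mul, mul_assoc]

lemma sum_flip' (n : ℕ) (f : ℕ → ℂ) :
    ∑ k ∈ Finset.range (n+1), f (n - k) = ∑ k ∈ Finset.range (n+1), f k := by
  rw [← Finset.sum_range_reflect]
  apply Finset.sum_congr rfl
  intro k hk
  rw [Finset.mem_range] at hk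
  congr 1
  omega

lemma Lsum_transfer (P : Polynomial ℂ) (H : PowerSeries ℂ) (d : ℕ) (hP : P.natDegree ≤ d) :
    Lsum (d+1) P H = PowerSeries.coeff (R := ℂ) d ((P.reflect d : Polynomial ℂ) * H) := by
  rw [PowerSeries.coeff_mul, Finset.Nat.sum_antidiagonal_eq_sum_range_succ_mk]
  have step : ∀ k ∈ Finset.range (d+1),
      PowerSeries.coeff k ((P.reflect d : Polynomial ℂ) : PowerSeries ℂ) *
        PowerSeries.coeff (d - k) H
      = P.coeff (d - k) * PowerSeries.coeff (d - k) H := by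
    intro k hk
    rw [Finset.mem_range] at hk
    rw [Polynomial.coeff_coe, Polynomial.coeff_reflect,
      Polynomial.revAt_le (by omega : k ≤ d)]
  rw [Finset.sum_congr rfl step]
  unfold Lsum
  exact (sum_flip' d (fun k => P.coeff k * PowerSeries.coeff k H)).symm ▸
    (sum_flip' d (fun k => P.coeff k * PowerSeries.coeff k H))

lemma reflect_X_add_C (a : ℂ) :
    (Polynomial.X + Polynomial.C a).reflect 1 = 1 + Polynomial.C a * Polynomial.X := by
  rw [Polynomial.reflect_add, Polynomial.reflect_C, ← pow_one (Polynomial.X : Polynomial ℂ),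
    Polynomial.reflect_monomial]
  norm_num [Polynomial.revAt_le]

lemma reflect_one_add_C_mul_X (a : ℂ) :
    ((1 : Polynomial ℂ) + Polynomial.C a * Polynomial.X).reflect 1
      = Polynomial.X + Polynomial.C a := by
  rw [Polynomial.reflect_add, ← Polynomial.C_1, Polynomial.reflect_C,
    ← pow_one (Polynomial.X : Polynomial ℂ), Polynomial.reflect_C_mul_X_pow]
  norm_num [Polynomial.revAt_le]

lemma natDegree_pow_le' (p : Polynomial ℂ) (h : p.natDegree ≤ 1) (n : ℕ) :
    (p ^ n).natDegree ≤ n := by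
  refine le_trans Polynomial.natDegree_pow_le ?_
  calc n * p.natDegree ≤ n * 1 := Nat.mul_le_mul_left n h
    _ = n := Nat.mul_one n

lemma reflect_pow_lin (p q : Polynomial ℂ) (hp : p.natDegree ≤ 1) (h : p.reflect 1 = q)
    (m : ℕ) : (p ^ m).reflect m = q ^ m := by
  induction m with
  | zero => simp
  | succ m ihm =>
      rw [pow_succ, Polynomial.reflect_mul (p ^ m) p (natDegree_pow_le' p hp m) hp,
        ihm, h, pow_succ]

lemma coeff_poly_mul_Dinv (Bp : Polynomial ℂ) (d : ℕ) :
    PowerSeries.coeff d ((Bp : PowerSeries ℂ) * Dinv)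
      = ∑ k ∈ Finset.range (d+1), Bp.coeff k * (-aMinus) ^ (d - k) := by
  rw [PowerSeries.coeff_mul, Finset.Nat.sum_antidiagonal_eq_sum_range_succ_mk]
  exact Finset.sum_congr rfl fun k _ => by rw [Polynomial.coeff_coe, Dinv, PowerSeries.coeff_mk]

lemma sum_coeff_rev (Bp : Polynomial ℂ) (d : ℕ) (hd : Bp.natDegree ≤ d) (u : ℂ) :
    ∑ k ∈ Finset.range (d+1), Bp.coeff k * u ^ (d - k) = (Bp.reflect d).eval u := by
  have hdeg : (Bp.reflect d).natDegree < d + 1 := by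
    have : (Bp.reflect d).natDegree ≤ d := by
      rw [Polynomial.natDegree_le_iff_coeff_eq_zero]
      intro m hm
      rw [Polynomial.coeff_reflect]
      have : Polynomial.revAt d m = m := Polynomial.revAt_eq_self_of_lt hm
      rw [this]
      exact Polynomial.coeff_eq_zero_of_natDegree_lt (by omega)
    omega
  rw [Polynomial.eval_eq_sum_range' hdeg]
  rw [← sum_flip' d (fun k => Bp.coeff k * u ^ (d - k))]
  apply Finset.sum_congr rfl
  intro k hk
  rw [Finset.mem_range] at hk
  rw [Polynomial.coeff_reflect, Polynomial.revAt_le (by omega : k ≤ d),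
    show d - (d - k) = k from by omega]

lemma hOX1 : ((1 : Polynomial ℂ) + Polynomial.X).natDegree ≤ 1 := by
  refine le_trans (Polynomial.natDegree_add_le _ _) ?_
  simp [Polynomial.natDegree_X_le]

lemma hA1 : (Apoly).natDegree ≤ 1 := by
  show ((1 : Polynomial ℂ) + Polynomial.C aPlus * Polynomial.X).natDegree ≤ 1
  refine le_trans (Polynomial.natDegree_add_le _ _) ?_
  simp only [Polynomial.natDegree_one]
  simp only [max_le_iff, Nat.zero_le, true_and]
  exact le_trans (Polynomial.natDegree_C_mul_le _ _) Polynomial.natDegree_X_le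

lemma hD1 : (Dpoly).natDegree ≤ 1 := by
  show ((1 : Polynomial ℂ) + Polynomial.C aMinus * Polynomial.X).natDegree ≤ 1
  refine le_trans (Polynomial.natDegree_add_le _ _) ?_
  simp only [Polynomial.natDegree_one]
  simp only [max_le_iff, Nat.zero_le, true_and]
  exact le_trans (Polynomial.natDegree_C_mul_le _ _) Polynomial.natDegree_X_le

lemma hXC1 : (Polynomial.X + Polynomial.C aMinus).natDegree ≤ 1 :=
  (Polynomial.natDegree_X_add_C aMinus).le

lemma natDegree_main_le (NN mm : ℕ) (Q : Polynomial ℂ) :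
    (Polynomial.X ^ NN * (Polynomial.X + Polynomial.C aMinus) ^ mm * Q).natDegree
      ≤ NN + (mm + Q.natDegree) := by
  refine le_trans (Polynomial.natDegree_mul_le) ?_
  have h1 : (Polynomial.X ^ NN * (Polynomial.X + Polynomial.C aMinus) ^ mm :
      Polynomial ℂ).natDegree ≤ NN + mm := by
    refine le_trans (Polynomial.natDegree_mul_le) ?_
    exact add_le_add (Polynomial.natDegree_X_pow_le NN) (natDegree_pow_le' _ hXC1 mm)
  omega

lemma reflect_main (NN mm : ℕ) (Q : Polynomial ℂ) :
    (Polynomial.X ^ NN * (Polynomial.X + Polynomial.C aMinus) ^ mm * Q).reflect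
        (NN + (mm + Q.natDegree))
      = Dpoly ^ mm * Q.reflect Q.natDegree := by
  rw [mul_assoc]
  rw [Polynomial.reflect_mul (Polynomial.X ^ NN) _ (Polynomial.natDegree_X_pow_le NN)
    (le_trans Polynomial.natDegree_mul_le (add_le_add (natDegree_pow_le' _ hXC1 mm) le_rfl))]
  rw [Polynomial.reflect_monomial, Polynomial.revAt_le (le_refl NN), Nat.sub_self, pow_zero,
    one_mul]
  rw [Polynomial.reflect_mul _ Q (natDegree_pow_le' _ hXC1 mm) le_rfl]
  congr 1
  exact reflect_pow_lin (Polynomial.X + Polynomial.C aMinus) Dpoly hXC1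
    (by rw [reflect_X_add_C]; rfl) mm

lemma Lsum_vanish (NN mm x y : ℕ) (hx : x < NN) (hy : y ≤ mm) (Q : Polynomial ℂ) (B : ℕ)
    (hB : (Polynomial.X ^ NN * (Polynomial.X + Polynomial.C aMinus) ^ mm * Q).natDegree < B) :
    Lsum B (Polynomial.X ^ NN * (Polynomial.X + Polynomial.C aMinus) ^ mm * Q) (G x y) = 0 := by
  set P : Polynomial ℂ :=
    Polynomial.X ^ NN * (Polynomial.X + Polynomial.C aMinus) ^ mm * Q with hPdef
  set d : ℕ := NN + (mm + Q.natDegree) with hddef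
  have hdP : P.natDegree ≤ d := natDegree_main_le NN mm Q
  rw [Lsum_congr_bound P (G x y) hB (by omega : P.natDegree < d + 1)]
  rw [Lsum_transfer P (G x y) d hdP]
  rw [hPdef, reflect_main NN mm Q]
  rw [Polynomial.coe_mul, Polynomial.coe_pow]
  have heq : ((Dpoly : Polynomial ℂ) : PowerSeries ℂ) ^ mm *
      ((Q.reflect Q.natDegree : Polynomial ℂ) : PowerSeries ℂ) * G x y
      = ((Q.reflect Q.natDegree : Polynomial ℂ) : PowerSeries ℂ) *
        (((Dpoly : Polynomial ℂ) : PowerSeries ℂ) ^ mm * G x y) := by ring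
  rw [heq, Dpow_mul_G x y mm hy, ← Polynomial.coe_mul, Polynomial.coeff_coe]
  apply Polynomial.coeff_eq_zero_of_natDegree_lt
  have hb1 : ((1 + Polynomial.X) ^ x * Apoly ^ y * Dpoly ^ (mm - y) :
      Polynomial ℂ).natDegree ≤ x + y + (mm - y) := by
    refine le_trans (Polynomial.natDegree_mul_le) ?_
    refine add_le_add (le_trans (Polynomial.natDegree_mul_le) ?_) (natDegree_pow_le' _ hD1 _)
    exact add_le_add (natDegree_pow_le' _ hOX1 x) (natDegree_pow_le' _ hA1 y)
  have hb2 : (Q.reflect Q.natDegree *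
      ((1 + Polynomial.X) ^ x * Apoly ^ y * Dpoly ^ (mm - y))).natDegree
      ≤ Q.natDegree + (x + y + (mm - y)) := by
    refine le_trans (Polynomial.natDegree_mul_le) (add_le_add ?_ hb1)
    rw [Polynomial.natDegree_le_iff_coeff_eq_zero]
    intro m hm
    rw [Polynomial.coeff_reflect, Polynomial.revAt_eq_self_of_lt (by omega)]
    exact Polynomial.coeff_eq_zero_of_natDegree_lt (by omega)
  omega

lemma Lsum_base_const (NN mm : ℕ) (hN : 1 ≤ NN) (B : ℕ)
    (hB : (Polynomial.X ^ NN * (Polynomial.X + Polynomial.C aMinus) ^ mm).natDegree < B) :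
    Lsum B (Polynomial.X ^ NN * (Polynomial.X + Polynomial.C aMinus) ^ mm) (G 0 (mm+1))
      = (-aMinus) ^ (NN-1) * Complex.I ^ (mm+1) := by
  set P : Polynomial ℂ :=
    Polynomial.X ^ NN * (Polynomial.X + Polynomial.C aMinus) ^ mm with hPdef
  set d : ℕ := NN + mm with hddef
  have hdP : P.natDegree ≤ d := by
    rw [hPdef, hddef]
    have h := natDegree_main_le NN mm 1
    simp only [mul_one, Polynomial.natDegree_one, Nat.add_zero] at h
    exact h
  rw [Lsum_congr_bound P _ hB (by omega : P.natDegree < d + 1)]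
  rw [Lsum_transfer P _ d hdP]
  have hrefl : P.reflect d = Dpoly ^ mm := by
    rw [hPdef, hddef]
    have h := reflect_main NN mm 1
    simp only [mul_one, Polynomial.natDegree_one, Nat.add_zero, Polynomial.reflect_one,
      pow_zero] at h
    exact h
  rw [hrefl, Polynomial.coe_pow]
  have hDG : ((Dpoly : Polynomial ℂ) : PowerSeries ℂ) ^ mm * G 0 (mm+1)
      = ((Apoly ^ (mm+1) : Polynomial ℂ) : PowerSeries ℂ) * Dinv := by
    simp only [G, pow_zero, one_mul, pow_succ]
    push_cast
    have hcan : (((Dpoly : Polynomial ℂ) : PowerSeries ℂ)) ^ mm * Dinv ^ mm = 1 := by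
      rw [← mul_pow, Dpoly_mul_Dinv, one_pow]
    linear_combination (((Apoly : Polynomial ℂ) : PowerSeries ℂ) ^ mm *
      ((Apoly : Polynomial ℂ) : PowerSeries ℂ) * Dinv) * hcan
  rw [hDG, coeff_poly_mul_Dinv]
  have hApow : (Apoly ^ (mm+1)).natDegree ≤ mm + 1 := natDegree_pow_le' _ hA1 (mm+1)
  have hrestrict : ∑ k ∈ Finset.range (d+1), (Apoly ^ (mm+1)).coeff k * (-aMinus) ^ (d - k)
      = ∑ k ∈ Finset.range (mm+2), (Apoly ^ (mm+1)).coeff k * (-aMinus) ^ (d - k) := by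
    refine (Finset.sum_subset (Finset.range_subset_range.2 (by omega)) ?_).symm
    intro k _ hk
    rw [Finset.mem_range, not_lt] at hk
    rw [Polynomial.coeff_eq_zero_of_natDegree_lt (by omega), zero_mul]
  rw [hrestrict]
  have hsplit : ∀ k ∈ Finset.range (mm+2),
      (Apoly ^ (mm+1)).coeff k * (-aMinus) ^ (d - k)
      = (-aMinus) ^ (NN-1) * ((Apoly ^ (mm+1)).coeff k * (-aMinus) ^ ((mm+1) - k)) := by
    intro k hk
    rw [Finset.mem_range] at hk
    rw [show d - k = (NN - 1) + ((mm+1) - k) from by omega, pow_add]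
    ring
  rw [Finset.sum_congr rfl hsplit, ← Finset.mul_sum]
  congr 1
  rw [sum_coeff_rev (Apoly ^ (mm+1)) (mm+1) hApow (-aMinus)]
  have : (Apoly ^ (mm+1)).reflect (mm+1) = (Polynomial.X + Polynomial.C aPlus) ^ (mm+1) :=
    reflect_pow_lin Apoly (Polynomial.X + Polynomial.C aPlus) hA1
      (by rw [show Apoly = 1 + Polynomial.C aPlus * Polynomial.X from rfl,
        reflect_one_add_C_mul_X]) (mm+1)
  rw [this]
  rw [Polynomial.eval_pow, Polynomial.eval_add, Polynomial.eval_X, Polynomial.eval_C]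
  rw [show -aMinus + aPlus = aPlus - aMinus from by ring, aPlus_sub_aMinus]

lemma coeff_G_x_zero (x n : ℕ) :
    PowerSeries.coeff n (G x 0) = (x.choose n : ℂ) := by
  simp only [G, pow_zero, mul_one]
  rw [Polynomial.coeff_coe, Polynomial.coeff_one_add_X_pow]

lemma forward (NN mm : ℕ) (hN : 1 ≤ NN) (P : Polynomial ℂ) (B : ℕ) (hB : P.natDegree < B)
    (h : ∀ x < NN, ∀ y ≤ mm, Lsum B P (G x y) = 0) :
    Polynomial.X ^ NN * (Polynomial.X + Polynomial.C aMinus) ^ mm ∣ P := by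
  induction mm generalizing P with
  | zero =>
      rw [pow_zero, mul_one]
      rw [Polynomial.X_pow_dvd_iff]
      intro x
      induction x using Nat.strong_induction_on with
      | _ x IH =>
        intro hxN
        by_cases hxB : x < B
        · have hx0 := h x hxN 0 le_rfl
          unfold Lsum at hx0
          have hterm : ∀ n ∈ Finset.range B, n ≠ x →
              P.coeff n * PowerSeries.coeff n (G x 0) = 0 := by
            intro n _ hn
            rcases lt_or_gt_of_ne hn with hlt | hgt
            · rw [IH n hlt (by omega), zero_mul]
            · rw [coeff_G_x_zero, Nat.choose_eq_zero_of_lt hgt, Nat.cast_zero, mul_zero]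
          rw [Finset.sum_eq_single_of_mem x (Finset.mem_range.2 hxB) hterm] at hx0
          rw [coeff_G_x_zero, Nat.choose_self, Nat.cast_one, mul_one] at hx0
          exact hx0
        · exact Polynomial.coeff_eq_zero_of_natDegree_lt (by omega)
  | succ mm ihm =>
      obtain ⟨Q, hQ⟩ := ihm P hB fun x hx y hy => h x hx y (by omega)
      set e : ℂ := -aMinus with he
      have hmonic : (Polynomial.X + Polynomial.C aMinus).Monic := Polynomial.monic_X_add_C _
      have hmod : Q %ₘ (Polynomial.X + Polynomial.C aMinus)
          = Polynomial.C (Q.eval e) := by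
        have := Polynomial.modByMonic_X_sub_C_eq_C_eval Q e
        rw [he, Polynomial.C_neg, sub_neg_eq_add] at this
        exact this
      set r : ℂ := Q.eval e with hr
      set Q₂ : Polynomial ℂ := Q /ₘ (Polynomial.X + Polynomial.C aMinus) with hQ2
      have hQsplit : Q = (Polynomial.X + Polynomial.C aMinus) * Q₂ + Polynomial.C r := by
        have := Polynomial.modByMonic_add_div Q (Polynomial.X + Polynomial.C aMinus)
        rw [hmod] at this
        linear_combination -this
      have hP2 : P = Polynomial.X ^ NN * (Polynomial.X + Polynomial.C aMinus) ^ (mm+1) * Q₂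
          + Polynomial.C r * (Polynomial.X ^ NN * (Polynomial.X + Polynomial.C aMinus) ^ mm) := by
        rw [hQ, hQsplit]
        ring
      -- pick a big bound
      set P1 : Polynomial ℂ :=
        Polynomial.X ^ NN * (Polynomial.X + Polynomial.C aMinus) ^ (mm+1) * Q₂ with hP1
      set P0 : Polynomial ℂ :=
        Polynomial.X ^ NN * (Polynomial.X + Polynomial.C aMinus) ^ mm with hP0
      set B' : ℕ := P.natDegree + P1.natDegree + P0.natDegree + 1 with hB'
      have hdP1 : P1.natDegree < B' := by omega
      have hdP0 : (Polynomial.C r * P0).natDegree < B' := by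
        have := Polynomial.natDegree_C_mul_le r P0
        omega
      have hzero : Lsum B' P (G 0 (mm+1)) = 0 := by
        rw [Lsum_congr_bound P _ (by omega : P.natDegree < B') hB]
        exact h 0 hN (mm+1) le_rfl
      rw [hP2, Lsum_add] at hzero
      have hvan : Lsum B' P1 (G 0 (mm+1)) = 0 := by
        rw [hP1]
        refine Lsum_vanish NN (mm+1) 0 (mm+1) hN le_rfl Q₂ B' ?_
        rw [← hP1]
        exact hdP1
      have hconst : Lsum B' P0 (G 0 (mm+1)) = (-aMinus) ^ (NN-1) * Complex.I ^ (mm+1) := by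
        rw [hP0]
        refine Lsum_base_const NN mm hN B' ?_
        rw [← hP0]
        have := Polynomial.natDegree_C_mul_le r P0
        omega
      rw [hvan, Lsum_C_mul, hconst, zero_add] at hzero
      have hIne : Complex.I ^ (mm+1) ≠ 0 := pow_ne_zero _ Complex.I_ne_zero
      have hene : (-aMinus) ^ (NN-1) ≠ 0 := pow_ne_zero _ neg_aMinus_ne
      have hr0 : r = 0 := by
        rcases mul_eq_zero.1 hzero with h' | h'
        · exact h'
        · exact absurd h' (by simp [hIne, hene, mul_eq_zero])
      rw [hr0, Polynomial.C_0, add_zero] at hQsplit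
      refine ⟨Q₂, ?_⟩
      rw [hQ, hQsplit]
      ring

/-- Let `λ ∈ Λ₊` with `Im λ ≥ 0`, `N = Re λ + 1`, `m = Im λ`. A discrete
analytic polynomial `p = Σ_{n ≤ M} aₙ z⁽ⁿ⁾` vanishes on `R_λ` iff the polynomial
`Σ aₙ Xⁿ` is divisible by `Xᴺ (X + α₋)ᵐ`; in particular every nonzero discrete analytic
polynomial vanishing on `R_λ` has degree at least `Re λ + Im λ + 1`. -/
theorem stmt19 (l : GaussianInt) (hl : 0 ≤ l.re) (him : 0 ≤ l.im) (M : ℕ) (a : ℕ → ℂ) :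
    ((∀ w ∈ RRect l, ∑ n ∈ Finset.range (M + 1), a n * zpoly n w = 0) ↔
      Polynomial.X ^ (l.re.toNat + 1) * (Polynomial.X + Polynomial.C aMinus) ^ l.im.toNat ∣
        ∑ n ∈ Finset.range (M + 1), Polynomial.C (a n) * Polynomial.X ^ n) ∧
    ((∀ w ∈ RRect l, ∑ n ∈ Finset.range (M + 1), a n * zpoly n w = 0) →
      (∃ n, n ≤ M ∧ a n ≠ 0) →
      ∃ n, n ≤ M ∧ a n ≠ 0 ∧ l.re.toNat + l.im.toNat + 1 ≤ n) := by
  set NN : ℕ := l.re.toNat + 1 with hNN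
  set mm : ℕ := l.im.toNat with hmm
  set P : Polynomial ℂ :=
    ∑ n ∈ Finset.range (M + 1), Polynomial.C (a n) * Polynomial.X ^ n with hP
  have hre : l.re = (l.re.toNat : ℤ) := (Int.toNat_of_nonneg hl).symm
  have him' : l.im = (l.im.toNat : ℤ) := (Int.toNat_of_nonneg him).symm
  have hcoeff : ∀ n, P.coeff n = if n ≤ M then a n else 0 := by
    intro n
    rw [hP, Polynomial.finset_sum_coeff]
    have : ∀ k ∈ Finset.range (M+1),
        (Polynomial.C (a k) * Polynomial.X ^ k).coeff n = if k = n then a k else 0 := by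
      intro k _
      rw [Polynomial.coeff_C_mul, Polynomial.coeff_X_pow]
      by_cases hkn : n = k <;> simp [hkn, eq_comm]
    rw [Finset.sum_congr rfl this, Finset.sum_ite_eq']
    simp only [Finset.mem_range]
    by_cases hnM : n ≤ M <;> simp [hnM, Nat.lt_succ_iff]
  have hdeg : P.natDegree ≤ M := by
    rw [Polynomial.natDegree_le_iff_coeff_eq_zero]
    intro n hn
    rw [hcoeff n, if_neg (by omega)]
  -- membership characterization
  have hmem_pt : ∀ x y : ℕ, x < NN → y ≤ mm → pt x y ∈ RRect l := by
    intro x y hx hy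
    refine ⟨by simp [pt], ?_, ?_, ?_⟩
    · show (x : ℤ) ≤ l.re
      omega
    · show |(y : ℤ)| ≤ |l.im|
      rw [abs_of_nonneg (Int.natCast_nonneg y), abs_of_nonneg him]
      omega
    · exact mul_nonneg (Int.natCast_nonneg y) him
  have hmem_rev : ∀ w ∈ RRect l, ∃ x y : ℕ, x < NN ∧ y ≤ mm ∧ w = pt x y := by
    intro w hw
    obtain ⟨hw1, hw2, hw3, hw4⟩ := hw
    have hwim : 0 ≤ w.im := by
      rcases lt_or_eq_of_le him with hpos | heq
      · by_contra hneg
        push_neg at hneg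
        nlinarith [hw4]
      · rw [← heq] at hw3
        simp only [abs_zero, abs_nonpos_iff] at hw3
        omega
    refine ⟨w.re.toNat, w.im.toNat, by omega, ?_, ?_⟩
    · rw [abs_of_nonneg hwim, abs_of_nonneg him] at hw3
      omega
    · show w = ⟨((w.re.toNat : ℤ)), ((w.im.toNat : ℤ))⟩
      have h1 : (w.re.toNat : ℤ) = w.re := Int.toNat_of_nonneg hw1
      have h2 : (w.im.toNat : ℤ) = w.im := Int.toNat_of_nonneg hwim
      exact Zsqrtd.ext h1.symm h2.symm
  have hlink : ∀ x y : ℕ, (∑ n ∈ Finset.range (M + 1), a n * zpoly n (pt x y))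
      = Lsum (M+1) P (G x y) := by
    intro x y
    unfold Lsum
    apply Finset.sum_congr rfl
    intro n hn
    rw [Finset.mem_range] at hn
    rw [zpoly_eq, hcoeff n, if_pos (by omega)]
  have hiff : (∀ w ∈ RRect l, ∑ n ∈ Finset.range (M + 1), a n * zpoly n w = 0) ↔
      Polynomial.X ^ NN * (Polynomial.X + Polynomial.C aMinus) ^ mm ∣ P := by
    constructor
    · intro hv
      refine forward NN mm (by omega) P (M+1) (by omega) ?_
      intro x hx y hy
      rw [← hlink x y]
      exact hv (pt x y) (hmem_pt x y hx hy)
    · rintro ⟨Q, hQ⟩ w hw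
      obtain ⟨x, y, hx, hy, rfl⟩ := hmem_rev w hw
      rw [hlink x y, hQ]
      refine Lsum_vanish NN mm x y hx hy Q (M+1) ?_
      rw [← hQ]
      omega
  refine ⟨hiff, ?_⟩
  intro hv hex
  obtain ⟨Q, hQ⟩ := hiff.1 hv
  have hPne : P ≠ 0 := by
    obtain ⟨n, hnM, hna⟩ := hex
    intro h0
    have := hcoeff n
    rw [h0, Polynomial.coeff_zero, if_pos hnM] at this
    exact hna this.symm
  have hQne : Q ≠ 0 := by
    intro h0
    rw [h0, mul_zero] at hQ
    exact hPne hQ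
  have hXne : (Polynomial.X ^ NN : Polynomial ℂ) ≠ 0 := pow_ne_zero _ Polynomial.X_ne_zero
  have hDne : ((Polynomial.X + Polynomial.C aMinus) ^ mm : Polynomial ℂ) ≠ 0 :=
    pow_ne_zero _ (Polynomial.monic_X_add_C aMinus).ne_zero
  have hnd : P.natDegree = NN + mm + Q.natDegree := by
    rw [hQ, Polynomial.natDegree_mul (mul_ne_zero hXne hDne) hQne,
      Polynomial.natDegree_mul hXne hDne, Polynomial.natDegree_X_pow,
      Polynomial.Monic.natDegree_pow (Polynomial.monic_X_add_C aMinus) mm,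
      Polynomial.natDegree_X_add_C, Nat.mul_one]
  refine ⟨P.natDegree, by omega, ?_, by omega⟩
  have := hcoeff P.natDegree
  rw [if_pos (by omega)] at this
  rw [← this]
  exact Polynomial.leadingCoeff_ne_zero.mpr hPne

end
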